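/- Let u_1,...,u_r ∈ R^n be vectors with pairwise disjoint supports forming the columns of U. Then for any q ≥ 2, ‖UUᵀ‖_{q→q*} = ‖U‖_{2→q*}² ≤ r^{1−2/q} · (max_ℓ ‖u_ℓ‖_{q*})². -/

import Mathlib

open scoped BigOperators
open Matrix

noncomputable def lpNorm {n : ℕ} (p : ℝ) (v : Fin n → ℝ) : ℝ :=
  (∑ i, |v i| ^ p) ^ (1 / p)

noncomputable def opNorm {m n : ℕ} (p q : ℝ) (A : Matrix (Fin m) (Fin n) ℝ) : ℝ :=
  sSup {t : ℝ | ∃ v : Fin n → ℝ, v ≠ 0 ∧ t = lpNorm q (A.mulVec v) / lpNorm p v}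

noncomputable def frobSq {m n : ℕ} (A : Matrix (Fin m) (Fin n) ℝ) : ℝ :=
  ∑ i, ∑ j, (A i j) ^ 2

lemma lp_sum_nonneg {n : ℕ} (p : ℝ) (v : Fin n → ℝ) : 0 ≤ ∑ i, |v i| ^ p :=
  Finset.sum_nonneg fun i _ => Real.rpow_nonneg (abs_nonneg _) _

lemma lp_nonneg {n : ℕ} (p : ℝ) (v : Fin n → ℝ) : 0 ≤ lpNorm p v :=
  Real.rpow_nonneg (lp_sum_nonneg p v) _

lemma lp_pos {n : ℕ} {p : ℝ} (hp : 0 < p) {v : Fin n → ℝ} (hv : v ≠ 0) : 0 < lpNorm p v := by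
  obtain ⟨i, hi⟩ := Function.ne_iff.mp hv
  have hs : 0 < ∑ j, |v j| ^ p :=
    Finset.sum_pos' (fun j _ => Real.rpow_nonneg (abs_nonneg _) _)
      ⟨i, Finset.mem_univ i, Real.rpow_pos_of_pos (abs_pos.mpr hi) p⟩
  exact Real.rpow_pos_of_pos hs _

lemma lp_zero {n : ℕ} {p : ℝ} (hp : p ≠ 0) : lpNorm p (0 : Fin n → ℝ) = 0 := by
  simp [lpNorm, Real.zero_rpow hp, Real.zero_rpow (inv_ne_zero hp), Real.zero_rpow (one_div_ne_zero hp)]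

lemma lp_rpow {n : ℕ} {p : ℝ} (hp : p ≠ 0) (v : Fin n → ℝ) :
    lpNorm p v ^ p = ∑ i, |v i| ^ p := by
  rw [lpNorm, one_div, Real.rpow_inv_rpow (lp_sum_nonneg p v) hp]

lemma rpow_two' (x : ℝ) : x ^ (2:ℝ) = x * x := by
  rw [show (2:ℝ) = ((2:ℕ):ℝ) by norm_num, Real.rpow_natCast, sq]

lemma abs_rpow_two (x : ℝ) : |x| ^ (2:ℝ) = x * x := by
  rw [rpow_two', abs_mul_abs_self]

lemma lp2_sq {n : ℕ} (v : Fin n → ℝ) : lpNorm 2 v ^ (2:ℝ) = ∑ i, v i * v i := by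
  rw [lp_rpow (by norm_num) v]
  exact Finset.sum_congr rfl fun i _ => abs_rpow_two (v i)

lemma lp_holder {n : ℕ} {p q : ℝ} (hpq : Real.HolderConjugate p q) (v w : Fin n → ℝ) :
    ∑ i, v i * w i ≤ lpNorm p v * lpNorm q w := by
  simpa [lpNorm] using Real.inner_le_Lp_mul_Lq Finset.univ v w hpq

lemma conj22 : Real.HolderConjugate 2 2 := Real.holderConjugate_iff.mpr ⟨one_lt_two, by norm_num⟩

lemma dot_trans {n r : ℕ} (U : Matrix (Fin n) (Fin r) ℝ) (v : Fin n → ℝ) (w : Fin r → ℝ) :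
    ∑ i, v i * U.mulVec w i = ∑ ℓ, Uᵀ.mulVec v ℓ * w ℓ := by
  simp only [Matrix.mulVec, dotProduct, Matrix.transpose_apply, Finset.mul_sum,
    Finset.sum_mul]
  rw [Finset.sum_comm]
  exact Finset.sum_congr rfl fun ℓ _ => Finset.sum_congr rfl fun i _ => by ring

lemma abs_sum_rpow {r : ℕ} {p : ℝ} (hp : p ≠ 0) (f : Fin r → ℝ)
    (h : ∀ ℓ ℓ', ℓ ≠ ℓ' → f ℓ = 0 ∨ f ℓ' = 0) :
    |∑ ℓ, f ℓ| ^ p = ∑ ℓ, |f ℓ| ^ p := by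
  by_cases hz : ∀ ℓ, f ℓ = 0
  · simp [hz, Real.zero_rpow hp]
  · push_neg at hz; obtain ⟨ℓ₀, h0⟩ := hz
    have hr : ∀ b, b ≠ ℓ₀ → f b = 0 := fun b hb => (h b ℓ₀ hb).resolve_right h0
    rw [Finset.sum_eq_single ℓ₀ (fun b _ hb => hr b hb) (fun h => absurd (Finset.mem_univ _) h),
      Finset.sum_eq_single ℓ₀ (fun b _ hb => by rw [hr b hb]; simp [Real.zero_rpow hp])
        (fun h => absurd (Finset.mem_univ _) h)]

lemma disj_sum {n r : ℕ} {p : ℝ} (hp : 0 < p) (U : Matrix (Fin n) (Fin r) ℝ)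
    (hdisj : ∀ ℓ ℓ' : Fin r, ℓ ≠ ℓ' → ∀ i, U i ℓ = 0 ∨ U i ℓ' = 0) (x : Fin r → ℝ) :
    ∑ i, |U.mulVec x i| ^ p = ∑ ℓ, (∑ i, |U i ℓ| ^ p) * |x ℓ| ^ p := by
  simp only [Matrix.mulVec, dotProduct]
  have key : ∀ i, |∑ ℓ, U i ℓ * x ℓ| ^ p = ∑ ℓ, |U i ℓ * x ℓ| ^ p := by
    intro i
    refine abs_sum_rpow hp.ne' _ (fun ℓ ℓ' hne => ?_)
    rcases hdisj ℓ ℓ' hne i with h | h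
    · exact Or.inl (by rw [h, zero_mul])
    · exact Or.inr (by rw [h, zero_mul])
  rw [Finset.sum_congr rfl fun i _ => key i, Finset.sum_comm]
  refine Finset.sum_congr rfl fun ℓ _ => ?_
  rw [Finset.sum_mul]
  refine Finset.sum_congr rfl fun i _ => ?_
  rw [abs_mul, Real.mul_rpow (abs_nonneg _) (abs_nonneg _)]


lemma sum_rpow_le {r : ℕ} {qs : ℝ} (hqs0 : 0 < qs) (hqs2 : qs ≤ 2) (x : Fin r → ℝ) :
    ∑ ℓ, |x ℓ| ^ qs ≤ (r:ℝ) ^ (1 - qs/2) * (∑ ℓ, |x ℓ| ^ (2:ℝ)) ^ (qs/2) := by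
  rcases eq_or_lt_of_le hqs2 with h2 | h2
  · rw [h2]; norm_num
  · have hconj' : Real.HolderConjugate (2/qs) (2/(2-qs)) := by
      rw [Real.holderConjugate_iff]; constructor
      · rw [lt_div_iff₀ hqs0]; linarith
      · rw [inv_div, inv_div]; ring
    have H := Real.inner_le_Lp_mul_Lq Finset.univ (fun ℓ => |x ℓ| ^ qs) (fun _ => (1:ℝ)) hconj'
    simp only [mul_one, abs_one] at H
    have e1 : ∀ ℓ : Fin r, (abs (|x ℓ| ^ qs)) ^ (2/qs) = |x ℓ| ^ (2:ℝ) := by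
      intro ℓ
      rw [abs_of_nonneg (Real.rpow_nonneg (abs_nonneg _) _), ← Real.rpow_mul (abs_nonneg _)]
      congr 1
      field_simp
    have e2 : (1:ℝ) / (2/qs) = qs / 2 := one_div_div _ _
    have e3 : ∑ _ℓ : Fin r, (1:ℝ) ^ (2/(2-qs)) = (r:ℝ) := by
      simp [Real.one_rpow]
    have e4 : (1:ℝ) / (2/(2-qs)) = 1 - qs/2 := by
      rw [one_div_div]; ring
    rw [e2, e3, e4] at H
    calc ∑ ℓ, |x ℓ| ^ qs ≤ (∑ ℓ, (abs (|x ℓ| ^ qs)) ^ (2/qs)) ^ (qs/2) * (r:ℝ) ^ (1 - qs/2) := H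
      _ = (r:ℝ) ^ (1 - qs/2) * (∑ ℓ, |x ℓ| ^ (2:ℝ)) ^ (qs/2) := by
          rw [Finset.sum_congr rfl fun ℓ _ => e1 ℓ, mul_comm]

lemma mulVec_bound {n r : ℕ} {qs : ℝ} (hqs0 : 0 < qs) (hqs2 : qs ≤ 2)
    (U : Matrix (Fin n) (Fin r) ℝ)
    (hdisj : ∀ ℓ ℓ' : Fin r, ℓ ≠ ℓ' → ∀ i, U i ℓ = 0 ∨ U i ℓ' = 0) (x : Fin r → ℝ) :
    lpNorm qs (U.mulVec x) ≤
      ((r:ℝ) ^ (1/qs - 1/2) * (⨆ ℓ : Fin r, lpNorm qs (fun i => U i ℓ))) * lpNorm 2 x := by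
  set A := ⨆ ℓ : Fin r, lpNorm qs (fun i => U i ℓ) with hA
  have hA0 : 0 ≤ A := Real.iSup_nonneg fun ℓ => lp_nonneg _ _
  have hX0 : 0 ≤ lpNorm 2 x := lp_nonneg _ _
  have hC0 : 0 ≤ (r:ℝ) ^ (1/qs - 1/2) * A :=
    mul_nonneg (Real.rpow_nonneg (Nat.cast_nonneg r) _) hA0
  have key : ∑ i, |U.mulVec x i| ^ qs ≤ (((r:ℝ) ^ (1/qs - 1/2) * A) * lpNorm 2 x) ^ qs := by
    rw [disj_sum hqs0 U hdisj x]
    have step1 : ∑ ℓ, (∑ i, |U i ℓ| ^ qs) * |x ℓ| ^ qs ≤ A ^ qs * ∑ ℓ, |x ℓ| ^ qs := by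
      rw [Finset.mul_sum]
      refine Finset.sum_le_sum fun ℓ _ =>
        mul_le_mul_of_nonneg_right ?_ (Real.rpow_nonneg (abs_nonneg _) _)
      rw [← lp_rpow hqs0.ne' (fun i => U i ℓ)]
      exact Real.rpow_le_rpow (lp_nonneg _ _)
        (le_ciSup (f := fun ℓ => lpNorm qs (fun i => U i ℓ))
          (Set.Finite.bddAbove (Set.finite_range _)) ℓ) hqs0.le
    have step2 := sum_rpow_le hqs0 hqs2 x
    have hAq : 0 ≤ A ^ qs := Real.rpow_nonneg hA0 _
    calc ∑ ℓ, (∑ i, |U i ℓ| ^ qs) * |x ℓ| ^ qs ≤ A ^ qs * ∑ ℓ, |x ℓ| ^ qs := step1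
      _ ≤ A ^ qs * ((r:ℝ) ^ (1 - qs/2) * (∑ ℓ, |x ℓ| ^ (2:ℝ)) ^ (qs/2)) :=
          mul_le_mul_of_nonneg_left step2 hAq
      _ = (((r:ℝ) ^ (1/qs - 1/2) * A) * lpNorm 2 x) ^ qs := by
          rw [Real.mul_rpow (mul_nonneg (Real.rpow_nonneg (Nat.cast_nonneg r) _) hA0) hX0,
            Real.mul_rpow (Real.rpow_nonneg (Nat.cast_nonneg r) _) hA0]
          have hr : ((r:ℝ) ^ (1/qs - 1/2)) ^ qs = (r:ℝ) ^ (1 - qs/2) := by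
            rw [← Real.rpow_mul (Nat.cast_nonneg r)]
            congr 1
            field_simp
          have hXq : lpNorm 2 x ^ qs = (∑ ℓ, |x ℓ| ^ (2:ℝ)) ^ (qs/2) := by
            rw [lpNorm, ← Real.rpow_mul (lp_sum_nonneg _ _)]
            congr 1
            ring
          rw [hr, hXq]
          ring
  have h2 := Real.rpow_le_rpow (lp_sum_nonneg qs _) key (le_of_lt (one_div_pos.mpr hqs0))
  rw [lpNorm]
  calc (∑ i, |U.mulVec x i| ^ qs) ^ (1/qs)
      ≤ ((((r:ℝ) ^ (1/qs - 1/2) * A) * lpNorm 2 x) ^ qs) ^ (1/qs) := h2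
    _ = ((r:ℝ) ^ (1/qs - 1/2) * A) * lpNorm 2 x := by
        simpa [one_div] using Real.rpow_rpow_inv (mul_nonneg hC0 hX0) hqs0.ne'

set_option maxHeartbeats 1000000 in
theorem stmt12 {n r : ℕ} (q qs : ℝ) (hq : 2 ≤ q) (hconj : 1 / q + 1 / qs = 1)
    (U : Matrix (Fin n) (Fin r) ℝ)
    (hdisj : ∀ ℓ ℓ' : Fin r, ℓ ≠ ℓ' → ∀ i, U i ℓ = 0 ∨ U i ℓ' = 0) :
    opNorm q qs (U * Uᵀ) = (opNorm 2 qs U) ^ 2 ∧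
    (opNorm 2 qs U) ^ 2 ≤
      (r : ℝ) ^ (1 - 2 / q) * (⨆ ℓ : Fin r, lpNorm qs (fun i => U i ℓ)) ^ 2 := by
  have hq0 : 0 < q := by linarith
  have hq1 : 1 < q := by linarith
  have hq_ne : q ≠ 0 := hq0.ne'
  have hqinv : 1/qs = 1 - 1/q := by linarith
  have hqhalf : 1/q ≤ 1/2 := one_div_le_one_div_of_le (by norm_num) hq
  have hq_inv_pos : 0 < 1/q := by positivity
  have hqspos : 0 < 1/qs := by rw [hqinv]; linarith
  have hqs0 : 0 < qs := one_div_pos.mp hqspos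
  have hqs_ne : qs ≠ 0 := hqs0.ne'
  have hqs2 : qs ≤ 2 := by
    have h1 : (1:ℝ)/2 ≤ 1/qs := by rw [hqinv]; linarith
    have h2 : qs * (1/2) ≤ qs * (1/qs) := mul_le_mul_of_nonneg_left h1 hqs0.le
    rw [mul_one_div_cancel hqs_ne] at h2
    linarith
  have hpq : Real.HolderConjugate q qs := Real.holderConjugate_iff.mpr ⟨hq1, by rw [← one_div, ← one_div]; linarith⟩
  have hmul : q + qs = q * qs := by
    have h := hconj
    field_simp at h
    linarith
  set S : Set ℝ :=
    {t : ℝ | ∃ v : Fin r → ℝ, v ≠ 0 ∧ t = lpNorm qs (U.mulVec v) / lpNorm 2 v} with hSdef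
  set T : Set ℝ :=
    {t : ℝ | ∃ v : Fin n → ℝ, v ≠ 0 ∧ t = lpNorm qs ((U * Uᵀ).mulVec v) / lpNorm q v} with hTdef
  have hMS : opNorm 2 qs U = sSup S := rfl
  have hOT : opNorm q qs (U * Uᵀ) = sSup T := rfl
  set A := ⨆ ℓ : Fin r, lpNorm qs (fun i => U i ℓ) with hAdef
  have hA0 : 0 ≤ A := Real.iSup_nonneg fun ℓ => lp_nonneg _ _
  set C := (r:ℝ) ^ (1/qs - 1/2) * A with hCdef
  have hC0 : 0 ≤ C := mul_nonneg (Real.rpow_nonneg (Nat.cast_nonneg r) _) hA0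
  have hboundS : ∀ s ∈ S, s ≤ C := by
    rintro s ⟨x, hx, rfl⟩
    rw [div_le_iff₀ (lp_pos (by norm_num : (0:ℝ) < 2) hx)]
    exact mulVec_bound hqs0 hqs2 U hdisj x
  have hSbdd : BddAbove S := ⟨C, hboundS⟩
  have hM0 : 0 ≤ sSup S := Real.sSup_nonneg (by
    rintro t ⟨x, hx, rfl⟩; exact div_nonneg (lp_nonneg _ _) (lp_nonneg _ _))
  have hMC : sSup S ≤ C := Real.sSup_le hboundS hC0
  have hMv : ∀ w : Fin r → ℝ, lpNorm qs (U.mulVec w) ≤ sSup S * lpNorm 2 w := by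
    intro w
    by_cases hw : w = 0
    · rw [hw, Matrix.mulVec_zero, lp_zero hqs_ne, lp_zero (by norm_num : (2:ℝ) ≠ 0), mul_zero]
    · have hin : lpNorm qs (U.mulVec w) / lpNorm 2 w ∈ S := ⟨w, hw, rfl⟩
      have hle := le_csSup hSbdd hin
      have hposw := lp_pos (by norm_num : (0:ℝ) < 2) hw
      calc lpNorm qs (U.mulVec w)
          = (lpNorm qs (U.mulVec w) / lpNorm 2 w) * lpNorm 2 w := by field_simp
        _ ≤ sSup S * lpNorm 2 w := mul_le_mul_of_nonneg_right hle hposw.le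
  -- Part 2
  have part2 : (sSup S)^2 ≤ (r:ℝ) ^ (1 - 2/q) * A^2 := by
    have h1 : (sSup S)^2 ≤ C^2 := pow_le_pow_left₀ hM0 hMC 2
    refine h1.trans_eq ?_
    rw [hCdef, mul_pow]
    congr 1
    rw [← Real.rpow_natCast ((r:ℝ)^(1/qs - 1/2)) 2, ← Real.rpow_mul (Nat.cast_nonneg r)]
    congr 1
    push_cast
    rw [hqinv]; ring
  -- Part 1, upper bound
  have hTub : ∀ t ∈ T, t ≤ (sSup S)^2 := by
    rintro t ⟨v, hv, rfl⟩
    have hvq : 0 < lpNorm q v := lp_pos hq0 hv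
    have hz : (U * Uᵀ).mulVec v = U.mulVec (Uᵀ.mulVec v) := (Matrix.mulVec_mulVec v U Uᵀ).symm
    set w := Uᵀ.mulVec v with hwdef
    have h1 : lpNorm qs ((U * Uᵀ).mulVec v) ≤ sSup S * lpNorm 2 w := by
      rw [hz]; exact hMv w
    by_cases hw0 : lpNorm 2 w = 0
    · have hz0 : lpNorm qs ((U * Uᵀ).mulVec v) = 0 := by
        refine le_antisymm ?_ (lp_nonneg _ _)
        rw [hw0, mul_zero] at h1; exact h1
      rw [hz0, zero_div]
      positivity
    · have hwpos : 0 < lpNorm 2 w := lt_of_le_of_ne (lp_nonneg _ _) (Ne.symm hw0)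
      have h5 : lpNorm 2 w * lpNorm 2 w ≤ lpNorm q v * (sSup S * lpNorm 2 w) := by
        have e1 : lpNorm 2 w * lpNorm 2 w = ∑ ℓ, w ℓ * w ℓ := by
          rw [← rpow_two' (lpNorm 2 w)]; exact lp2_sq w
        calc lpNorm 2 w * lpNorm 2 w = ∑ ℓ, w ℓ * w ℓ := e1
          _ = ∑ i, v i * (U.mulVec w) i := (dot_trans U v w).symm
          _ ≤ lpNorm q v * lpNorm qs (U.mulVec w) := lp_holder hpq v _
          _ ≤ lpNorm q v * (sSup S * lpNorm 2 w) := by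
              refine mul_le_mul_of_nonneg_left ?_ hvq.le
              rw [← hz]; exact h1
      have key : lpNorm 2 w ≤ sSup S * lpNorm q v := by
        have h5' : lpNorm 2 w * lpNorm 2 w ≤ (sSup S * lpNorm q v) * lpNorm 2 w := by
          calc lpNorm 2 w * lpNorm 2 w ≤ lpNorm q v * (sSup S * lpNorm 2 w) := h5
            _ = (sSup S * lpNorm q v) * lpNorm 2 w := by ring
        exact le_of_mul_le_mul_right h5' hwpos
      calc lpNorm qs ((U * Uᵀ).mulVec v) / lpNorm q v
          ≤ (sSup S * lpNorm 2 w) / lpNorm q v := by gcongr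
        _ ≤ (sSup S * (sSup S * lpNorm q v)) / lpNorm q v := by gcongr
        _ = (sSup S)^2 := by field_simp
  have upper : sSup T ≤ (sSup S)^2 := Real.sSup_le hTub (sq_nonneg _)
  have hT0 : 0 ≤ sSup T := Real.sSup_nonneg (by
    rintro t ⟨x, hx, rfl⟩; exact div_nonneg (lp_nonneg _ _) (lp_nonneg _ _))
  -- Part 1, lower bound
  have lower : (sSup S)^2 ≤ sSup T := by
    by_contra hcon
    push_neg at hcon
    have hTbdd : BddAbove T := ⟨(sSup S)^2, hTub⟩
    have hM2pos : 0 < (sSup S)^2 := lt_of_le_of_lt hT0 hcon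
    have hMpos : 0 < sSup S := by
      rcases eq_or_lt_of_le hM0 with h | h
      · rw [← h] at hM2pos; norm_num at hM2pos
      · exact h
    set s0 := Real.sqrt (sSup T) with hs0def
    have hs0nn : 0 ≤ s0 := Real.sqrt_nonneg _
    have hs0sq : s0^2 = sSup T := Real.sq_sqrt hT0
    have hs0lt : s0 < sSup S := by
      have h2 : s0^2 < (sSup S)^2 := by rw [hs0sq]; exact hcon
      exact lt_of_pow_lt_pow_left₀ 2 hM0 h2
    have hSne : S.Nonempty := by
      by_contra hempty
      rw [Set.not_nonempty_iff_eq_empty] at hempty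
      rw [hempty, Real.sSup_empty] at hMpos
      exact absurd hMpos (lt_irrefl 0)
    obtain ⟨s, hsS, hs0s⟩ := exists_lt_of_lt_csSup hSne hs0lt
    obtain ⟨x, hx0, hseq⟩ := hsS
    have hXpos : 0 < lpNorm 2 x := lp_pos (by norm_num : (0:ℝ) < 2) hx0
    set w := U.mulVec x with hwdef
    have hwne : w ≠ 0 := by
      intro h
      rw [h, lp_zero hqs_ne, zero_div] at hseq
      linarith
    set W := ∑ i, |w i| ^ qs with hWdef
    have hWpos : 0 < W := by
      obtain ⟨i, hi⟩ := Function.ne_iff.mp hwne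
      exact Finset.sum_pos' (fun j _ => Real.rpow_nonneg (abs_nonneg _) _)
        ⟨i, Finset.mem_univ i, Real.rpow_pos_of_pos (abs_pos.mpr hi) _⟩
    set v : Fin n → ℝ := fun i => w i * |w i| ^ (qs - 2) with hvdef
    have hvne : v ≠ 0 := by
      obtain ⟨i, hi⟩ := Function.ne_iff.mp hwne
      refine Function.ne_iff.mpr ⟨i, ?_⟩
      show w i * |w i| ^ (qs - 2) ≠ 0
      exact mul_ne_zero hi (Real.rpow_pos_of_pos (abs_pos.mpr hi) _).ne'
    have f1 : ∀ i, v i * w i = |w i| ^ qs := by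
      intro i
      show (w i * |w i| ^ (qs - 2)) * w i = |w i| ^ qs
      by_cases h : w i = 0
      · simp [h, Real.zero_rpow hqs_ne]
      · have habs : 0 < |w i| := abs_pos.mpr h
        calc (w i * |w i| ^ (qs - 2)) * w i = (w i * w i) * |w i| ^ (qs - 2) := by ring
          _ = |w i| ^ (2:ℝ) * |w i| ^ (qs - 2) := by rw [abs_rpow_two]
          _ = |w i| ^ qs := by rw [← Real.rpow_add habs]; norm_num
    have f2 : ∀ i, |v i| ^ q = |w i| ^ qs := by
      intro i
      by_cases h : w i = 0
      · show |w i * |w i| ^ (qs - 2)| ^ q = |w i| ^ qs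
        simp [h, Real.zero_rpow hq_ne, Real.zero_rpow hqs_ne]
      · have habs : 0 < |w i| := abs_pos.mpr h
        have hv1 : |v i| = |w i| ^ (qs - 1) := by
          show |w i * |w i| ^ (qs - 2)| = |w i| ^ (qs - 1)
          rw [abs_mul, abs_of_nonneg (Real.rpow_nonneg (abs_nonneg _) _)]
          calc |w i| * |w i| ^ (qs - 2)
              = |w i| ^ (1:ℝ) * |w i| ^ (qs - 2) := by rw [Real.rpow_one]
            _ = |w i| ^ (qs - 1) := by rw [← Real.rpow_add habs]; congr 1; ring
        rw [hv1, ← Real.rpow_mul (abs_nonneg _)]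
        congr 1
        linear_combination -hmul
    have f3 : lpNorm q v = W ^ (1/q) := by
      rw [lpNorm, hWdef]
      congr 1
      exact Finset.sum_congr rfl fun i _ => f2 i
    have f4 : ∑ i, v i * w i = W := Finset.sum_congr rfl fun i _ => f1 i
    set w' := Uᵀ.mulVec v with hw'def
    have g1 : ∑ ℓ, w' ℓ * x ℓ = W := (dot_trans U v x).symm.trans f4
    have g2 : W ≤ lpNorm 2 w' * lpNorm 2 x := by
      rw [← g1]; exact lp_holder conj22 w' x
    have hNpos : 0 < lpNorm 2 w' := by
      rcases eq_or_lt_of_le (lp_nonneg 2 w') with h | h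
      · rw [← h, zero_mul] at g2; linarith
      · exact h
    have hz : (U * Uᵀ).mulVec v = U.mulVec w' := (Matrix.mulVec_mulVec v U Uᵀ).symm
    set Z := lpNorm qs ((U * Uᵀ).mulVec v) with hZdef
    have hZ0 : 0 ≤ Z := lp_nonneg _ _
    have g3 : lpNorm 2 w' * lpNorm 2 w' ≤ lpNorm q v * Z := by
      have e1 : lpNorm 2 w' * lpNorm 2 w' = ∑ ℓ, w' ℓ * w' ℓ := by
        rw [← rpow_two' (lpNorm 2 w')]; exact lp2_sq w'
      calc lpNorm 2 w' * lpNorm 2 w' = ∑ ℓ, w' ℓ * w' ℓ := e1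
        _ = ∑ i, v i * (U.mulVec w') i := (dot_trans U v w').symm
        _ ≤ lpNorm q v * lpNorm qs (U.mulVec w') := lp_holder hpq v _
        _ = lpNorm q v * Z := by rw [hZdef, hz]
    have htT : Z / lpNorm q v ∈ T := ⟨v, hvne, rfl⟩
    have htle : Z / lpNorm q v ≤ sSup T := le_csSup hTbdd htT
    -- main estimate : s^2 ≤ Z / lpNorm q v
    have hVpos : 0 < lpNorm q v := lp_pos hq0 hvne
    have hsW : s = W ^ (1/qs) / lpNorm 2 x := by
      rw [hseq, hWdef, lpNorm]
    have hWW : W * W ≤ lpNorm q v * Z * (lpNorm 2 x * lpNorm 2 x) := by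
      calc W * W ≤ (lpNorm 2 w' * lpNorm 2 x) * (lpNorm 2 w' * lpNorm 2 x) :=
            mul_self_le_mul_self hWpos.le g2
        _ = (lpNorm 2 w' * lpNorm 2 w') * (lpNorm 2 x * lpNorm 2 x) := by ring
        _ ≤ (lpNorm q v * Z) * (lpNorm 2 x * lpNorm 2 x) := by
            refine mul_le_mul_of_nonneg_right g3 ?_
            positivity
    have hcpos : 0 < W ^ (1/q) := Real.rpow_pos_of_pos hWpos _
    have h7 : W ^ ((2:ℝ) - 1/q) ≤ Z * (lpNorm 2 x)^2 := by
      have h6 : W ^ ((2:ℝ) - 1/q) * W ^ (1/q) ≤ (Z * (lpNorm 2 x)^2) * W ^ (1/q) := by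
        have lhs_eq : W ^ ((2:ℝ) - 1/q) * W ^ (1/q) = W * W := by
          rw [← Real.rpow_add hWpos, show (2:ℝ) - 1/q + 1/q = 2 by ring, rpow_two']
        rw [lhs_eq, ← f3]
        calc W * W ≤ lpNorm q v * Z * (lpNorm 2 x * lpNorm 2 x) := hWW
          _ = (Z * (lpNorm 2 x)^2) * lpNorm q v := by ring
      exact le_of_mul_le_mul_right h6 hcpos
    have hfinal : s^2 ≤ Z / lpNorm q v := by
      rw [hsW, div_pow, f3, div_le_div_iff₀ (pow_pos hXpos 2) hcpos]
      calc (W ^ (1/qs))^2 * W ^ (1/q)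
          = W ^ (1/qs + 1/qs + 1/q) := by
            rw [sq, ← Real.rpow_add hWpos, ← Real.rpow_add hWpos]
        _ = W ^ ((2:ℝ) - 1/q) := by
            congr 1
            rw [hqinv]; ring
        _ ≤ Z * (lpNorm 2 x)^2 := h7
    have hcontr : s^2 ≤ sSup T := hfinal.trans htle
    have hss : s0^2 < s^2 := by
      rw [sq, sq]; exact mul_self_lt_mul_self hs0nn hs0s
    rw [hs0sq] at hss
    exact absurd (lt_of_lt_of_le hss hcontr) (lt_irrefl _)
  rw [hOT, hMS]
  exact ⟨le_antisymm upper lower, part2⟩
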